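/- Let n ≥ 2 and let (L_i)_{i≥0} be the Markov chain on the integers {0, 1, …, n} with L₀ = 0 and, for each i ≥ 1, conditionally on L_{i−1}: L_i = L_{i−1} − 1 with probability L_{i−1}/n and L_i = L_{i−1} + 1 with probability 1 − L_{i−1}/n. Then for all sufficiently large n, the probability that there exists an integer ℓ with n/4 ≤ ℓ ≤ n² and L_{2ℓ} = 0 is at most n^{−4}. -/

import Mathlib

open scoped Classical
open Filter

noncomputable section

/-- Uniform (counting) probability of an event on a finite sample space. -/
def prob {Ω : Type*} [Finite Ω] (p : Ω → Prop) : ℝ :=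
  (Nat.card {ω : Ω // p ω} : ℝ) / (Nat.card Ω : ℝ)

/-- The biased random walk `(L_i)` on `{0, 1, …, n}` with `L₀ = 0`, realized from a
family `ω` of i.i.d. uniform random variables on `{0, …, n−1}`: at step `i+1` the
walk decreases by `1` if `ω i < L_i` — which, conditionally on `L_i`, happens with
probability `L_i / n` — and otherwise increases by `1`.  (Only the first `2n²` steps
are ever used below, so the drivers are indexed by `Fin (2·n²)`.) -/
def walk (n : ℕ) (ω : Fin (2 * n ^ 2) → Fin n) : ℕ → ℕ
  | 0 => 0
  | i + 1 =>
      if h : i < 2 * n ^ 2 then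
        if (ω ⟨i, h⟩ : ℕ) < walk n ω i then walk n ω i - 1 else walk n ω i + 1
      else walk n ω i

-- ### prob helpers

lemma prob_eq {Ω : Type*} [Fintype Ω] (p : Ω → Prop) :
    prob p = ((Finset.univ.filter p).card : ℝ) / (Fintype.card Ω : ℝ) := by
  unfold prob
  rw [Nat.card_eq_fintype_card, Nat.card_eq_fintype_card, Fintype.card_subtype]

lemma prob_nonneg {Ω : Type*} [Finite Ω] (p : Ω → Prop) : 0 ≤ prob p :=
  div_nonneg (by positivity) (by positivity)

lemma prob_zero {Ω : Type*} [Finite Ω] (p : Ω → Prop) (h : ∀ ω, ¬ p ω) :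
    prob p = 0 := by
  have : IsEmpty {ω : Ω // p ω} := ⟨fun x => h x.1 x.2⟩
  simp [prob, Nat.card_of_isEmpty]

lemma prob_le_sum {Ω : Type*} [Fintype Ω] {ι : Type*} (s : Finset ι)
    (E : ι → Ω → Prop) (p : Ω → Prop) (h : ∀ ω, p ω → ∃ i ∈ s, E i ω) :
    prob p ≤ ∑ i ∈ s, prob (E i) := by
  by_cases hc : (Fintype.card Ω : ℝ) = 0
  · simp only [prob_eq, hc, div_zero]
    simp
  · simp only [prob_eq, ← Finset.sum_div]
    apply div_le_div_of_nonneg_right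
    · calc ((Finset.univ.filter p).card : ℝ)
          ≤ ((s.biUnion (fun i => Finset.univ.filter (E i))).card : ℝ) := by
            exact_mod_cast Nat.cast_le.mpr (Finset.card_le_card (fun ω hω => by
              simp only [Finset.mem_filter, Finset.mem_univ, true_and] at hω
              obtain ⟨i, hi, hE⟩ := h ω hω
              exact Finset.mem_biUnion.mpr ⟨i, hi, by simp [hE]⟩))
        _ ≤ (∑ i ∈ s, (Finset.univ.filter (E i)).card : ℝ) := by
            exact_mod_cast Finset.card_biUnion_le
    · positivity

lemma card_lt_subtype (n m : ℕ) (hm : m ≤ n) :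
    Nat.card {x : Fin n // (x : ℕ) < m} = m := by
  have e : {x : Fin n // (x : ℕ) < m} ≃ Fin m :=
    { toFun := fun x => ⟨x.1, x.2⟩
      invFun := fun x => ⟨⟨x.1, lt_of_lt_of_le x.2 hm⟩, x.2⟩
      left_inv := fun x => by ext; rfl
      right_inv := fun x => by ext; rfl }
  rw [Nat.card_congr e, Nat.card_eq_fintype_card, Fintype.card_fin]

lemma card_pi_subtype (n T m : ℕ) (hm : m ≤ n) (S : Finset (Fin T)) :
    Nat.card {ω : Fin T → Fin n // ∀ i ∈ S, (ω i : ℕ) < m}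
      = m ^ S.card * n ^ (T - S.card) := by
  have e : {ω : Fin T → Fin n // ∀ i ∈ S, (ω i : ℕ) < m}
      ≃ ∀ i : Fin T, {x : Fin n // i ∈ S → (x : ℕ) < m} :=
    Equiv.subtypePiEquivPi (β := fun _ : Fin T => Fin n) (p := fun i x => i ∈ S → (x : ℕ) < m)
  rw [Nat.card_congr e, Nat.card_pi]
  have hval : ∀ i : Fin T, Nat.card {x : Fin n // i ∈ S → (x : ℕ) < m}
      = if i ∈ S then m else n := by
    intro i
    by_cases hi : i ∈ S
    · rw [if_pos hi]
      have : {x : Fin n // i ∈ S → (x : ℕ) < m} ≃ {x : Fin n // (x : ℕ) < m} :=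
        Equiv.subtypeEquivRight (fun x => by simp [hi])
      rw [Nat.card_congr this, card_lt_subtype n m hm]
    · rw [if_neg hi]
      have : {x : Fin n // i ∈ S → (x : ℕ) < m} ≃ Fin n :=
        Equiv.subtypeEquivRight (fun x => by simp [hi]) |>.trans
          (Equiv.subtypeUnivEquiv (fun _ => trivial))
      rw [Nat.card_congr this, Nat.card_eq_fintype_card, Fintype.card_fin]
  rw [Finset.prod_congr rfl (fun i _ => hval i), Finset.prod_ite,
    Finset.prod_const, Finset.prod_const]
  have h1 : (Finset.univ.filter (fun i => i ∈ S)).card = S.card := by simp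
  have h2 : (Finset.univ.filter (fun i => ¬ i ∈ S)).card = T - S.card := by
    rw [Finset.filter_not]
    simp [Finset.card_sdiff_of_subset (Finset.subset_univ _)]
  rw [h1, h2]

lemma prob_forall_lt (n T m : ℕ) (hn : 0 < n) (hm : m ≤ n) (S : Finset (Fin T)) :
    prob (fun ω : Fin T → Fin n => ∀ i ∈ S, (ω i : ℕ) < m)
      = ((m : ℝ) / n) ^ S.card := by
  unfold prob
  rw [card_pi_subtype n T m hm S, Nat.card_fun]
  simp only [Nat.card_eq_fintype_card, Fintype.card_fin]
  have hsT : S.card ≤ T := by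
    simpa using Finset.card_le_univ S
  have hnT : (n : ℝ) ^ T = n ^ (T - S.card) * n ^ S.card := by
    rw [← pow_add]; congr 1; omega
  push_cast
  rw [hnT, div_pow, mul_comm ((m:ℝ) ^ S.card)]
  rw [mul_div_mul_left _ _ (by positivity : ((n:ℝ) ^ (T - S.card)) ≠ 0)]

-- ### walk helpers

lemma walk_succ (n : ℕ) (ω : Fin (2 * n ^ 2) → Fin n) (i : ℕ) :
    walk n ω (i + 1) =
      if h : i < 2 * n ^ 2 then
        if (ω ⟨i, h⟩ : ℕ) < walk n ω i then walk n ω i - 1 else walk n ω i + 1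
      else walk n ω i := rfl

lemma walk_le_succ_add_one (n : ℕ) (ω : Fin (2 * n ^ 2) → Fin n) (i : ℕ) :
    walk n ω i ≤ walk n ω (i + 1) + 1 := by
  rw [walk_succ]
  split_ifs <;> omega

lemma walk_le_add (n : ℕ) (ω : Fin (2 * n ^ 2) → Fin n) (i j : ℕ) :
    walk n ω i ≤ walk n ω (i + j) + j := by
  induction j with
  | zero => simp
  | succ j ih =>
    calc walk n ω i ≤ walk n ω (i + j) + j := ih
      _ ≤ (walk n ω (i + j + 1) + 1) + j := by
          exact Nat.add_le_add_right (walk_le_succ_add_one n ω (i + j)) j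
      _ = walk n ω (i + (j + 1)) + (j + 1) := by ring_nf

lemma core (n ℓ : ℕ) (hℓ1 : (n : ℝ) / 4 ≤ (ℓ : ℝ)) (hℓ2 : ℓ ≤ n ^ 2)
    (ω : Fin (2 * n ^ 2) → Fin n) (h0 : walk n ω (2 * ℓ) = 0) :
    ∃ S ∈ Finset.powersetCard (n / 16)
        ((Finset.Ico (2 * ℓ - 2 * (n / 16)) (2 * ℓ)).attachFin
          (fun j hj => lt_of_lt_of_le (Finset.mem_Ico.mp hj).2
            (Nat.mul_le_mul_left 2 hℓ2))),
      ∀ i ∈ S, (ω i : ℕ) < 2 * (n / 16) := by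
  set k := n / 16 with hk
  set m := 2 * (n / 16) with hmdef
  have hn4 : n ≤ 4 * ℓ := by
    have h4 : (n : ℝ) ≤ 4 * ℓ := by linarith
    exact_mod_cast h4
  have hm2ℓ : m ≤ 2 * ℓ := by omega
  have h2ℓT : 2 * ℓ ≤ 2 * n ^ 2 := Nat.mul_le_mul_left 2 hℓ2
  -- upper bound on walk before time 2ℓ
  have hB : ∀ i, i ≤ 2 * ℓ → walk n ω i ≤ 2 * ℓ - i := by
    intro i hi
    have h := walk_le_add n ω i (2 * ℓ - i)
    rw [show i + (2 * ℓ - i) = 2 * ℓ by omega, h0] at h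
    omega
  -- step values
  have hstep : ∀ j ∈ Finset.Ico (2 * ℓ - m) (2 * ℓ),
      ((walk n ω (j + 1) : ℤ) - walk n ω j)
        = if walk n ω (j + 1) < walk n ω j then -1 else 1 := by
    intro j hj
    have hjb := Finset.mem_Ico.mp hj
    have hjT : j < 2 * n ^ 2 := lt_of_lt_of_le hjb.2 h2ℓT
    have hs := walk_succ n ω j
    rw [dif_pos hjT] at hs
    by_cases hd : (ω ⟨j, hjT⟩ : ℕ) < walk n ω j
    · rw [if_pos hd] at hs
      split_ifs <;> omega
    · rw [if_neg hd] at hs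
      split_ifs <;> omega
  -- telescoping sum
  have tele : ∑ j ∈ Finset.Ico (2 * ℓ - m) (2 * ℓ),
      ((walk n ω (j + 1) : ℤ) - walk n ω j)
        = (walk n ω (2 * ℓ) : ℤ) - walk n ω (2 * ℓ - m) := by
    rw [Finset.sum_Ico_eq_sub _ (by omega : 2 * ℓ - m ≤ 2 * ℓ),
      Finset.sum_range_sub (fun i => (walk n ω i : ℤ)),
      Finset.sum_range_sub (fun i => (walk n ω i : ℤ))]
    ring
  rw [Finset.sum_congr rfl hstep, Finset.sum_ite, Finset.sum_const,
    Finset.sum_const] at tele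
  have hcards := Finset.card_filter_add_card_filter_not
    (s := Finset.Ico (2 * ℓ - m) (2 * ℓ))
    (p := fun j => walk n ω (j + 1) < walk n ω j)
  rw [Nat.card_Ico] at hcards
  simp only [nsmul_eq_mul, mul_neg, mul_one] at tele
  rw [h0] at tele
  set downs := (Finset.Ico (2 * ℓ - m) (2 * ℓ)).filter
    (fun j => walk n ω (j + 1) < walk n ω j) with hdowns
  have hdcard : k ≤ downs.card := by omega
  obtain ⟨S', hsub, hScard⟩ := Finset.exists_subset_card_eq hdcard
  have hS'Ico : ∀ j ∈ S', j ∈ Finset.Ico (2 * ℓ - m) (2 * ℓ) := by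
    intro j hj
    exact Finset.mem_of_mem_filter j (hsub hj)
  have helem : ∀ j ∈ S', ∀ (hjT : j < 2 * n ^ 2), (ω ⟨j, hjT⟩ : ℕ) < m := by
    intro j hj hjT
    have hd := (Finset.mem_filter.mp (hsub hj)).2
    have hjb := Finset.mem_Ico.mp (hS'Ico j hj)
    have hs := walk_succ n ω j
    rw [dif_pos hjT] at hs
    by_cases hdir : (ω ⟨j, hjT⟩ : ℕ) < walk n ω j
    · have hw := hB j (le_of_lt hjb.2)
      omega
    · rw [if_neg hdir] at hs
      omega
  refine ⟨S'.attachFin (fun j hj =>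
      lt_of_lt_of_le (Finset.mem_Ico.mp (hS'Ico j hj)).2 h2ℓT), ?_, ?_⟩
  · rw [Finset.mem_powersetCard]
    constructor
    · intro i hi
      rw [Finset.mem_attachFin] at hi ⊢
      exact hS'Ico i.1 hi
    · rw [Finset.card_attachFin]
      exact hScard
  · intro i hi
    rw [Finset.mem_attachFin] at hi
    have := helem i.1 hi i.isLt
    simpa using this

lemma choose_le_two_pow (m k : ℕ) : m.choose k ≤ 2 ^ m := by
  by_cases h : k ≤ m
  · calc m.choose k ≤ ∑ i ∈ Finset.range (m + 1), m.choose i :=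
        Finset.single_le_sum (f := fun i => m.choose i)
          (fun i _ => Nat.zero_le _) (Finset.mem_range.mpr (by omega))
    _ = 2 ^ m := Nat.sum_range_choose m
  · rw [Nat.choose_eq_zero_of_lt (by omega)]
    exact Nat.zero_le _

lemma lin_le_two_pow : ∀ L, 11 ≤ L → 96 * L + 112 ≤ 2 ^ L := by
  intro L hL
  induction L, hL using Nat.le_induction with
  | base => norm_num
  | succ L hL ih =>
    have h2 : 2048 ≤ 2 ^ L := by
      calc (2048 : ℕ) = 2 ^ 11 := by norm_num
      _ ≤ 2 ^ L := Nat.pow_le_pow_right (by norm_num) hL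
    have : 2 ^ (L + 1) = 2 ^ L + 2 ^ L := by ring
    omega

lemma numeric (n : ℕ) (hn : 2048 ≤ n) : n ^ 4 * (n ^ 2 + 1) ≤ 2 ^ (n / 16) := by
  set L := Nat.log 2 n with hL
  have hL11 : 11 ≤ L := by
    rw [hL]
    exact (Nat.le_log_iff_pow_le (by norm_num) (by omega)).mpr (by norm_num; omega)
  have h2L : 2 ^ L ≤ n := Nat.pow_log_le_self 2 (by omega)
  have hlin := lin_le_two_pow L hL11
  have hdiv : 6 * L + 7 ≤ n / 16 := by omega
  have hnlt : n ≤ 2 ^ (L + 1) := le_of_lt (Nat.lt_pow_succ_log_self (by norm_num) n)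
  have h46 : n ^ 4 ≤ n ^ 6 := Nat.pow_le_pow_right (by omega) (by norm_num)
  calc n ^ 4 * (n ^ 2 + 1) = n ^ 6 + n ^ 4 := by ring
    _ ≤ 2 * n ^ 6 := by omega
    _ ≤ 2 * (2 ^ (L + 1)) ^ 6 := by
        have := Nat.pow_le_pow_left hnlt 6
        omega
    _ = 2 ^ (6 * L + 7) := by ring
    _ ≤ 2 ^ (n / 16) := Nat.pow_le_pow_right (by norm_num) hdiv

/-- For all sufficiently large `n`, the probability that the biased random walk
`(L_i)` on `{0,…,n}` (starting at `0`, decreasing by `1` with probability `L_{i−1}/n`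
and increasing by `1` otherwise) returns to `0` at some time `2ℓ` with
`n/4 ≤ ℓ ≤ n²` is at most `n^{−4}`. -/
theorem stmt_19 :
    ∀ᶠ n : ℕ in atTop,
      prob (fun ω : Fin (2 * n ^ 2) → Fin n =>
          ∃ ℓ : ℕ, (n : ℝ) / 4 ≤ (ℓ : ℝ) ∧ ℓ ≤ n ^ 2 ∧ walk n ω (2 * ℓ) = 0)
        ≤ ((n : ℝ) ^ 4)⁻¹ := by
  rw [eventually_atTop]
  refine ⟨2048, fun n hn => ?_⟩
  have hn0 : 0 < n := by omega
  set k := n / 16 with hk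
  set m := 2 * (n / 16) with hm
  have hmn : m ≤ n := by omega
  -- step 1 : union bound over ℓ ∈ range (n^2+1)
  have step1 : prob (fun ω : Fin (2 * n ^ 2) → Fin n =>
        ∃ ℓ : ℕ, (n : ℝ) / 4 ≤ (ℓ : ℝ) ∧ ℓ ≤ n ^ 2 ∧ walk n ω (2 * ℓ) = 0)
      ≤ ∑ ℓ ∈ Finset.range (n ^ 2 + 1),
          prob (fun ω : Fin (2 * n ^ 2) → Fin n =>
            (n : ℝ) / 4 ≤ (ℓ : ℝ) ∧ ℓ ≤ n ^ 2 ∧ walk n ω (2 * ℓ) = 0) := by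
    apply prob_le_sum
    rintro ω ⟨ℓ, h1, h2, h3⟩
    exact ⟨ℓ, Finset.mem_range.mpr (by omega), h1, h2, h3⟩
  -- step 2 : bound each term
  have step2 : ∀ ℓ ∈ Finset.range (n ^ 2 + 1),
      prob (fun ω : Fin (2 * n ^ 2) → Fin n =>
          (n : ℝ) / 4 ≤ (ℓ : ℝ) ∧ ℓ ≤ n ^ 2 ∧ walk n ω (2 * ℓ) = 0)
        ≤ ((2 : ℝ) ^ k)⁻¹ := by
    intro ℓ _
    by_cases hc : (n : ℝ) / 4 ≤ (ℓ : ℝ) ∧ ℓ ≤ n ^ 2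
    swap
    · rw [prob_zero _ (fun ω h => hc ⟨h.1, h.2.1⟩)]
      positivity
    obtain ⟨hc1, hc2⟩ := hc
    set W := (Finset.Ico (2 * ℓ - m) (2 * ℓ)).attachFin
        (fun j hj => lt_of_lt_of_le (Finset.mem_Ico.mp hj).2
          (Nat.mul_le_mul_left 2 hc2)) with hW
    have hWcard : W.card ≤ m := by
      rw [hW, Finset.card_attachFin, Nat.card_Ico]
      omega
    have hstep : prob (fun ω : Fin (2 * n ^ 2) → Fin n =>
          (n : ℝ) / 4 ≤ (ℓ : ℝ) ∧ ℓ ≤ n ^ 2 ∧ walk n ω (2 * ℓ) = 0)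
        ≤ ∑ S ∈ Finset.powersetCard k W,
            prob (fun ω : Fin (2 * n ^ 2) → Fin n => ∀ i ∈ S, (ω i : ℕ) < m) := by
      apply prob_le_sum
      rintro ω ⟨h1, h2, h3⟩
      exact core n ℓ h1 hc2 ω h3
    have hval : ∀ S ∈ Finset.powersetCard k W,
        prob (fun ω : Fin (2 * n ^ 2) → Fin n => ∀ i ∈ S, (ω i : ℕ) < m)
          = ((m : ℝ) / n) ^ k := by
      intro S hS
      rw [prob_forall_lt n (2 * n ^ 2) m hn0 hmn S,
        (Finset.mem_powersetCard.mp hS).2]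
    have hchoose : (W.card.choose k : ℝ) ≤ (2 : ℝ) ^ m := by
      exact_mod_cast le_trans (Nat.choose_le_choose k hWcard) (choose_le_two_pow m k)
    have hm8 : (m : ℝ) / n ≤ 1 / 8 := by
      rw [div_le_div_iff₀ (by exact_mod_cast hn0) (by norm_num)]
      have h8 : 8 * m ≤ n := by omega
      have h8' : (8 * m : ℝ) ≤ n := by exact_mod_cast h8
      linarith
    calc prob (fun ω : Fin (2 * n ^ 2) → Fin n =>
          (n : ℝ) / 4 ≤ (ℓ : ℝ) ∧ ℓ ≤ n ^ 2 ∧ walk n ω (2 * ℓ) = 0)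
        ≤ ∑ S ∈ Finset.powersetCard k W,
            prob (fun ω : Fin (2 * n ^ 2) → Fin n => ∀ i ∈ S, (ω i : ℕ) < m) := hstep
      _ = (W.card.choose k : ℝ) * ((m : ℝ) / n) ^ k := by
          rw [Finset.sum_congr rfl hval, Finset.sum_const,
            Finset.card_powersetCard, nsmul_eq_mul]
      _ ≤ (2 : ℝ) ^ m * ((1 : ℝ) / 8) ^ k := by
          apply mul_le_mul hchoose
            (pow_le_pow_left₀ (by positivity) hm8 k) (by positivity) (by positivity)
      _ = ((2 : ℝ) ^ k)⁻¹ := by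
          have hmk : m = 2 * k := by rw [hm, hk]
          rw [hmk, pow_mul, ← mul_pow, ← inv_pow]
          norm_num
  -- assemble
  have step3 : ∑ ℓ ∈ Finset.range (n ^ 2 + 1),
      prob (fun ω : Fin (2 * n ^ 2) → Fin n =>
        (n : ℝ) / 4 ≤ (ℓ : ℝ) ∧ ℓ ≤ n ^ 2 ∧ walk n ω (2 * ℓ) = 0)
      ≤ ((n ^ 2 + 1 : ℕ) : ℝ) * ((2 : ℝ) ^ k)⁻¹ := by
    calc _ ≤ ∑ _ℓ ∈ Finset.range (n ^ 2 + 1), ((2 : ℝ) ^ k)⁻¹ :=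
        Finset.sum_le_sum step2
      _ = ((n ^ 2 + 1 : ℕ) : ℝ) * ((2 : ℝ) ^ k)⁻¹ := by
        rw [Finset.sum_const, Finset.card_range, nsmul_eq_mul]
  have final : ((n ^ 2 + 1 : ℕ) : ℝ) * ((2 : ℝ) ^ k)⁻¹ ≤ ((n : ℝ) ^ 4)⁻¹ := by
    have hnum := numeric n hn
    rw [← div_eq_mul_inv, ← one_div ((n:ℝ)^4),
      div_le_div_iff₀ (by positivity) (by positivity), one_mul]
    have h2 : (n ^ 2 + 1) * n ^ 4 ≤ 2 ^ k := by
      rw [mul_comm]; exact hnum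
    exact_mod_cast h2
  calc _ ≤ _ := step1
    _ ≤ _ := step3
    _ ≤ _ := final
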